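/- Let X be a complex Banach space, let 1 ≤ p < ∞ and 1/p + 1/q = 1, and let (R(t))_{t>0} ⊆ L(X) be a strongly continuous family of bounded linear operators on X such that M := Σ_{k=0}^{∞} ‖R(·)‖_{L^q[k,k+1]} < ∞, where ‖R(·)‖_{L^q[k,k+1]} denotes the L^q-norm of the operator-norm function s ↦ ‖R(s)‖ over [k,k+1]. If g : ℝ → X is Stepanov p-almost anti-periodic, then the function G(t) := ∫_{−∞}^{t} R(t−s) g(s) ds, t ∈ ℝ, is well-defined (the integral converges absolutely for each t) and G is almost anti-periodic; moreover, if for some ε > 0 and τ > 0 one has ∫_t^{t+1} ‖g(s+τ) + g(s)‖^p ds ≤ ε^p for all t ∈ ℝ, then ‖G(t+τ) + G(t)‖ ≤ M·ε for all t ∈ ℝ. -/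

import Mathlib

open MeasureTheory
open scoped ENNReal

/-- A set `S` of (positive) real numbers is relatively dense. -/
def RelativelyDense (S : Set ℝ) : Prop :=
  ∃ l > 0, ∀ a : ℝ, 0 ≤ a → ∃ τ ∈ S, a ≤ τ ∧ τ ≤ a + l

/-- `f : ℝ → X` is almost anti-periodic. -/
def AlmostAntiPeriodic {X : Type*} [NormedAddCommGroup X] (f : ℝ → X) : Prop :=
  ∀ ε > 0, RelativelyDense {τ : ℝ | 0 < τ ∧ ∀ t : ℝ, ‖f (t + τ) + f t‖ ≤ ε}

/-- `g : ℝ → X` is Stepanov `p`-almost anti-periodic: the function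
`ĝ : ℝ → L^p([0,1] : X)`, `ĝ(t)(s) = g (t+s)`, is almost anti-periodic. -/
def StepanovAlmostAntiPeriodic {X : Type*} [NormedAddCommGroup X]
    (p : ℝ≥0∞) (g : ℝ → X) : Prop :=
  ∀ ε > 0, RelativelyDense {τ : ℝ | 0 < τ ∧ ∀ t : ℝ,
    eLpNorm (fun s => g (t + τ + s) + g (t + s)) p
        (MeasureTheory.volume.restrict (Set.Icc (0 : ℝ) 1))
      ≤ ENNReal.ofReal ε}


section AuxLemmas

open Set

lemma aux_map_reflect (t : ℝ) (A : Set ℝ) (hA : MeasurableSet A) :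
    Measure.map (fun x : ℝ => t - x) (volume.restrict ((fun x : ℝ => t - x) ⁻¹' A)) =
      volume.restrict A := by
  rw [← Measure.restrict_map (measurable_const_sub t) hA,
    (Measure.measurePreserving_sub_left volume t).map_eq]

lemma aux_key {X : Type*} [NormedAddCommGroup X] [NormedSpace ℂ X]
    (p q : ℝ≥0∞) (hp1 : 1 ≤ p) (hp2 : p ≠ ⊤) (hpq : p⁻¹ + q⁻¹ = 1)
    (R : ℝ → X →L[ℂ] X)
    (hRstrong : ∀ x : X, ContinuousOn (fun t => R t x) (Set.Ioi (0 : ℝ)))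
    {h : ℝ → X} (hh : AEStronglyMeasurable h volume) (t : ℝ) (k : ℕ) :
    ∫⁻ s in Ioc (t - (k + 1) : ℝ) (t - k), (‖R (t - s) (h s)‖₊ : ℝ≥0∞) ≤
      eLpNorm (fun u => ‖R u‖) q (volume.restrict (Ioc (k : ℝ) (k + 1))) *
        eLpNorm h p (volume.restrict (Ioc (t - (k + 1) : ℝ) (t - k))) := by
  have hp0 : p ≠ 0 := (lt_of_lt_of_le zero_lt_one hp1).ne'
  have hq0 : q ≠ 0 := by
    intro hq
    rw [hq, ENNReal.inv_zero] at hpq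
    simp at hpq
  -- separable range machinery
  obtain ⟨h', h'sm, hae⟩ := hh
  obtain ⟨T0, hT0c, hT0⟩ := h'sm.isSeparable_range
  have hTne : (insert (0 : X) T0).Nonempty := ⟨0, mem_insert _ _⟩
  obtain ⟨c, hc⟩ := (hT0c.insert (0 : X)).exists_eq_range hTne
  -- the measurable minorant of the operator norm
  set B : ℝ → ℝ≥0∞ := fun s => ⨆ n, (‖R (t - s) (c n)‖₊ : ℝ≥0∞) / ‖c n‖₊ with hB
  have hBdd : ∀ s : ℝ, ∀ y ∈ closure (range c), (‖R (t - s) y‖₊ : ℝ≥0∞) ≤ B s * ‖y‖₊ := by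
    intro s y hy
    by_cases hy0 : y = 0
    · simp [hy0]
    obtain ⟨x, hx_mem, hx_lim⟩ := mem_closure_iff_seq_limit.mp hy
    have step : ∀ j, (‖R (t - s) (x j)‖₊ : ℝ≥0∞) ≤ B s * ‖x j‖₊ := by
      intro j
      obtain ⟨n, hn⟩ := hx_mem j
      by_cases hcn : c n = 0
      · rw [← hn, hcn]; simp
      · have h1 : (‖R (t - s) (c n)‖₊ : ℝ≥0∞) / ‖c n‖₊ ≤ B s := le_iSup (fun m => (‖R (t - s) (c m)‖₊ : ℝ≥0∞) / ‖c m‖₊) n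
        have h2 : (‖R (t - s) (c n)‖₊ : ℝ≥0∞) =
            (‖R (t - s) (c n)‖₊ : ℝ≥0∞) / ‖c n‖₊ * ‖c n‖₊ := by
          rw [ENNReal.div_mul_cancel (by simpa using hcn) ENNReal.coe_ne_top]
        rw [← hn, h2]
        exact mul_le_mul_left h1 _
    by_cases hBs : B s = ∞
    · have : (‖y‖₊ : ℝ≥0∞) ≠ 0 := by simpa using hy0
      rw [hBs, ENNReal.top_mul this]
      exact le_top
    · have l1 : Filter.Tendsto (fun j => (‖R (t - s) (x j)‖₊ : ℝ≥0∞)) Filter.atTop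
          (nhds (‖R (t - s) y‖₊ : ℝ≥0∞)) :=
        ENNReal.tendsto_coe.2 (((R (t - s)).continuous.tendsto y).comp hx_lim).nnnorm
      have l2 : Filter.Tendsto (fun j => B s * (‖x j‖₊ : ℝ≥0∞)) Filter.atTop
          (nhds (B s * ‖y‖₊)) :=
        ENNReal.Tendsto.const_mul (ENNReal.tendsto_coe.2 hx_lim.nnnorm) (Or.inr hBs)
      exact le_of_tendsto_of_tendsto' l1 l2 step
  have hBle : ∀ s : ℝ, B s ≤ (‖R (t - s)‖₊ : ℝ≥0∞) := by
    intro s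
    refine iSup_le fun n => ?_
    by_cases hcn : c n = 0
    · simp [hcn]
    · rw [ENNReal.div_le_iff_le_mul (Or.inl (by simpa using hcn)) (Or.inl ENNReal.coe_ne_top)]
      exact_mod_cast (R (t - s)).le_opNNNorm (c n)
  have cont : ∀ x : X, ContinuousOn (fun s => R (t - s) x) (Iio t) := by
    intro x
    have hmt : MapsTo (fun s : ℝ => t - s) (Iio t) (Ioi (0 : ℝ)) := by
      intro s hs
      simp only [mem_Iio] at hs
      simp only [mem_Ioi]
      linarith
    exact (hRstrong x).comp ((continuous_const.sub continuous_id).continuousOn) hmt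
  have hBmeas : AEMeasurable B (volume.restrict (Iio t)) := by
    refine AEMeasurable.iSup fun n => ?_
    have : ContinuousOn (fun s => (‖R (t - s) (c n)‖₊ : ℝ≥0∞)) (Iio t) :=
      (ENNReal.continuous_coe.comp continuous_nnnorm).comp_continuousOn (cont (c n))
    exact (this.aemeasurable measurableSet_Iio).div aemeasurable_const
  have hemb : MeasurableEmbedding (fun s : ℝ => t - s) :=
    (MeasurableEquiv.subLeft t).measurableEmbedding
  -- interval setup
  set a : ℝ := t - (k + 1) with ha
  set I : Set ℝ := Ioo a (t - k) with hI
  have hIsub : I ⊆ Iio t := by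
    intro s hs
    rcases hs with ⟨_, h2⟩
    simp only [mem_Iio]
    have : (k : ℝ) ≥ 0 := Nat.cast_nonneg k
    linarith
  set ν := volume.restrict I with hν
  have hres : volume.restrict (Ioc a (t - k)) = ν :=
    (Measure.restrict_congr_set Ioo_ae_eq_Ioc).symm
  have hae' : h =ᵐ[ν] h' := ae_restrict_of_ae hae
  have hrange : ∀ s : ℝ, h' s ∈ closure (range c) := by
    intro s
    have h1 : h' s ∈ closure T0 := hT0 (mem_range_self s)
    have h2 : closure T0 ⊆ closure (range c) := by
      rw [← hc]
      exact closure_mono (subset_insert 0 T0)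
    exact h2 h1
  have h'meas : AEMeasurable (fun s => (‖h' s‖₊ : ℝ≥0∞)) ν :=
    h'sm.enorm.aemeasurable
  have hmap : Measure.map (fun s : ℝ => t - s) ν = volume.restrict (Ioo (k : ℝ) (k + 1)) := by
    have hpre : (fun s : ℝ => t - s) ⁻¹' (Ioo (k : ℝ) (k + 1)) = I := by
      ext s
      simp only [mem_preimage, mem_Ioo, hI, ha]
      constructor <;> rintro ⟨h1, h2⟩ <;> constructor <;> linarith
    rw [hν, ← hpre]
    exact aux_map_reflect t _ measurableSet_Ioo
  have hstep : ∫⁻ s in Ioc a (t - k), (‖R (t - s) (h s)‖₊ : ℝ≥0∞) ≤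
      ∫⁻ s, B s * ‖h' s‖₊ ∂ν := by
    rw [hres]
    calc ∫⁻ s, (‖R (t - s) (h s)‖₊ : ℝ≥0∞) ∂ν
        = ∫⁻ s, (‖R (t - s) (h' s)‖₊ : ℝ≥0∞) ∂ν :=
          lintegral_congr_ae (hae'.mono fun s hs => by dsimp only; rw [hs])
      _ ≤ ∫⁻ s, B s * ‖h' s‖₊ ∂ν := lintegral_mono fun s => hBdd s (h' s) (hrange s)
  refine le_trans hstep ?_
  by_cases hp1' : p = 1
  · -- p = 1, q = ∞
    have hqtop : q = ∞ := by
      rw [hp1'] at hpq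
      simp only [inv_one] at hpq
      have : q⁻¹ = 0 := by
        have := (ENNReal.add_right_inj (a := 1) ENNReal.one_ne_top (b := q⁻¹) (c := 0)).mp
        simpa using this (by simpa using hpq)
      simpa [ENNReal.inv_eq_zero] using this
    set C := eLpNorm (fun u => ‖R u‖) q (volume.restrict (Ioc (k : ℝ) (k + 1))) with hC
    have hRae : ∀ᵐ s ∂ν, B s ≤ C := by
      have h1 : ∀ᵐ u ∂(volume.restrict (Ioc (k : ℝ) (k + 1))), (‖R u‖₊ : ℝ≥0∞) ≤ C := by
        have h0 := enorm_ae_le_eLpNormEssSup (fun u => ‖R u‖)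
          (volume.restrict (Ioc (k : ℝ) (k + 1)))
        rw [hC, hqtop, eLpNorm_exponent_top]
        simpa [nnnorm_norm, enorm_eq_nnnorm] using h0
      have h2 : ∀ᵐ u ∂(volume.restrict (Ioo (k : ℝ) (k + 1))), (‖R u‖₊ : ℝ≥0∞) ≤ C :=
        h1.filter_mono (ae_mono (Measure.restrict_mono Ioo_subset_Ioc_self le_rfl))
      rw [← hmap] at h2
      have h3 := hemb.ae_map_iff.mp h2
      exact h3.mono fun s hs => le_trans (hBle s) hs
    calc ∫⁻ s, B s * ‖h' s‖₊ ∂ν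
        ≤ ∫⁻ s, C * ‖h' s‖₊ ∂ν :=
          lintegral_mono_ae (hRae.mono fun s hs => mul_le_mul_left hs _)
      _ = C * ∫⁻ s, (‖h' s‖₊ : ℝ≥0∞) ∂ν := lintegral_const_mul'' C h'meas
      _ = C * ∫⁻ s, (‖h s‖₊ : ℝ≥0∞) ∂ν := by
          congr 1
          exact lintegral_congr_ae (hae'.mono fun s hs => by dsimp only; rw [hs])
      _ = C * eLpNorm h p (volume.restrict (Ioc a (t - k))) := by
          rw [hp1', eLpNorm_one_eq_lintegral_enorm, hres]; rfl
  · -- 1 < p < ∞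
    have hp1lt : 1 < p := lt_of_le_of_ne hp1 (Ne.symm hp1')
    have hqinv0 : q⁻¹ ≠ 0 := by
      intro h0
      rw [h0, add_zero] at hpq
      exact hp1' (by simpa [ENNReal.inv_eq_one] using hpq)
    have hqt : q ≠ ∞ := by
      intro hq
      rw [hq] at hqinv0
      simp at hqinv0
    set pr := p.toReal with hprdef
    set qr := q.toReal with hqrdef
    have hpr1 : 1 < pr := by
      rw [hprdef, ← ENNReal.toReal_one]
      exact (ENNReal.toReal_lt_toReal ENNReal.one_ne_top hp2).mpr hp1lt
    have hsum : pr⁻¹ + qr⁻¹ = 1 := by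
      have hpinv : p⁻¹ ≠ ∞ := by simpa using hp0
      have hqinv : q⁻¹ ≠ ∞ := by simpa using hq0
      have h1 := congrArg ENNReal.toReal hpq
      rw [ENNReal.toReal_add hpinv hqinv, ENNReal.toReal_inv, ENNReal.toReal_inv,
        ENNReal.toReal_one] at h1
      exact h1
    have hconj : Real.HolderConjugate qr pr := (Real.holderConjugate_iff.mpr ⟨hpr1, hsum⟩).symm
    have hBmeas' : AEMeasurable B ν :=
      hBmeas.mono_measure (Measure.restrict_mono hIsub le_rfl)
    have holder := ENNReal.lintegral_mul_le_Lp_mul_Lq ν hconj hBmeas' h'meas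
    simp only [Pi.mul_apply] at holder
    refine le_trans holder ?_
    have hqr0 : (0:ℝ) ≤ qr := ENNReal.toReal_nonneg
    have hpr0 : (0:ℝ) ≤ pr := ENNReal.toReal_nonneg
    have e1 : (∫⁻ s, B s ^ qr ∂ν) ^ (1 / qr) ≤
        eLpNorm (fun u => ‖R u‖) q (volume.restrict (Ioc (k : ℝ) (k + 1))) := by
      rw [eLpNorm_eq_lintegral_rpow_enorm_toReal hq0 hqt]
      simp only [enorm_eq_nnnorm, nnnorm_norm]
      refine ENNReal.rpow_le_rpow ?_ (by positivity)
      calc ∫⁻ s, B s ^ qr ∂ν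
          ≤ ∫⁻ s, (‖R (t - s)‖₊ : ℝ≥0∞) ^ qr ∂ν :=
            lintegral_mono fun s => ENNReal.rpow_le_rpow (hBle s) hqr0
        _ = ∫⁻ u in Ioo (k : ℝ) (k + 1), (‖R u‖₊ : ℝ≥0∞) ^ qr := by
            rw [← hmap, hemb.lintegral_map]
        _ ≤ _ := lintegral_mono' (Measure.restrict_mono Ioo_subset_Ioc_self le_rfl) le_rfl
    have e2 : (∫⁻ s, (‖h' s‖₊ : ℝ≥0∞) ^ pr ∂ν) ^ (1 / pr) ≤
        eLpNorm h p (volume.restrict (Ioc a (t - k))) := by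
      rw [eLpNorm_eq_lintegral_rpow_enorm_toReal hp0 hp2, hres]
      refine ENNReal.rpow_le_rpow ?_ (by positivity)
      exact le_of_eq (lintegral_congr_ae (hae'.mono fun s hs => by simp only [hs, hprdef, enorm_eq_nnnorm]))
    exact mul_le_mul' e1 e2

lemma aux_meas {X : Type*} [NormedAddCommGroup X] [NormedSpace ℂ X] (R : ℝ → X →L[ℂ] X)
    (hRstrong : ∀ x : X, ContinuousOn (fun t => R t x) (Set.Ioi (0 : ℝ)))
    {h : ℝ → X} (hh : AEStronglyMeasurable h volume) (t : ℝ) :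
    AEStronglyMeasurable (fun s => R (t - s) (h s)) (volume.restrict (Iic t)) := by
  rw [Measure.restrict_congr_set (Iio_ae_eq_Iic (μ := volume) (a := t)).symm]
  obtain ⟨h', h'sm, hae⟩ := hh
  have hae' : h =ᵐ[volume.restrict (Iio t)] h' := ae_restrict_of_ae hae
  have cont : ∀ x : X, ContinuousOn (fun s => R (t - s) x) (Iio t) := by
    intro x
    have : MapsTo (fun s : ℝ => t - s) (Iio t) (Ioi (0 : ℝ)) := by
      intro s hs
      simp only [mem_Iio] at hs
      simp only [mem_Ioi]
      linarith
    exact (hRstrong x).comp ((continuous_const.sub continuous_id).continuousOn) this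
  have base : ∀ (φ : SimpleFunc ℝ X),
      AEStronglyMeasurable (fun s => R (t - s) (φ s)) (volume.restrict (Iio t)) := by
    intro φ
    refine SimpleFunc.induction (motive := fun φ =>
      AEStronglyMeasurable (fun s => R (t - s) (φ s)) (volume.restrict (Iio t))) ?_ ?_ φ
    · intro x S hS
      have heq : (fun s => R (t - s)
          ((SimpleFunc.piecewise S hS (SimpleFunc.const ℝ x) (SimpleFunc.const ℝ 0)) s)) =
          S.indicator (fun s => R (t - s) x) := by
        funext s
        rw [SimpleFunc.piecewise_apply]
        by_cases hsS : s ∈ S <;> simp [hsS, Set.indicator]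
      rw [heq]
      exact (((cont x).aestronglyMeasurable measurableSet_Iio)).indicator hS
    · intro φ ψ _ hφ hψ
      have heq : (fun s => R (t - s) ((φ + ψ) s)) =
          fun s => R (t - s) (φ s) + R (t - s) (ψ s) := by
        funext s; simp [map_add]
      rw [heq]; exact hφ.add hψ
  have hn : ∀ n, AEStronglyMeasurable (fun s => R (t - s) (h'sm.approx n s))
      (volume.restrict (Iio t)) := fun n => base _
  have lim : ∀ s, Filter.Tendsto (fun n => R (t - s) (h'sm.approx n s)) Filter.atTop
      (nhds (R (t - s) (h' s))) := fun s =>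
    ((R (t - s)).continuous.tendsto _).comp (h'sm.tendsto_approx s)
  have hsm' : AEStronglyMeasurable (fun s => R (t - s) (h' s)) (volume.restrict (Iio t)) :=
    aestronglyMeasurable_of_tendsto_ae Filter.atTop hn (Filter.Eventually.of_forall lim)
  exact hsm'.congr (hae'.mono fun s hs => congrArg (R (t - s)) hs.symm)

lemma aux_sum {X : Type*} [NormedAddCommGroup X] [NormedSpace ℂ X]
    (p q : ℝ≥0∞) (hp1 : 1 ≤ p) (hp2 : p ≠ ⊤) (hpq : p⁻¹ + q⁻¹ = 1)
    (R : ℝ → X →L[ℂ] X)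
    (hRstrong : ∀ x : X, ContinuousOn (fun t => R t x) (Set.Ioi (0 : ℝ)))
    {h : ℝ → X} (hh : AEStronglyMeasurable h volume) {C : ℝ≥0∞}
    (hC : ∀ u : ℝ, eLpNorm h p (volume.restrict (Ioc u (u + 1))) ≤ C) (t : ℝ) :
    ∫⁻ s in Iic t, (‖R (t - s) (h s)‖₊ : ℝ≥0∞) ≤
      (∑' k : ℕ, eLpNorm (fun u => ‖R u‖) q (volume.restrict (Ioc (k : ℝ) (k + 1)))) * C := by
  have hU : Iic t = ⋃ k : ℕ, Ioc (t - (k + 1) : ℝ) (t - k) := by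
    ext s
    simp only [mem_Iic, mem_iUnion, mem_Ioc]
    constructor
    · intro hs
      refine ⟨⌊t - s⌋₊, ?_, ?_⟩
      · have := Nat.lt_floor_add_one (t - s)
        linarith
      · have := Nat.floor_le (sub_nonneg.mpr hs)
        linarith
    · rintro ⟨k, h1, h2⟩
      have : (k : ℝ) ≥ 0 := Nat.cast_nonneg k
      linarith
  have hdisj : Pairwise (Function.onFun Disjoint fun k : ℕ => Ioc (t - (k + 1) : ℝ) (t - k)) := by
    intro j k hjk
    simp only [Function.onFun]
    rw [Set.Ioc_disjoint_Ioc]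
    rcases hjk.lt_or_gt with hlt | hlt
    · have hjk' : (j : ℝ) + 1 ≤ k := by exact_mod_cast Nat.succ_le_of_lt hlt
      calc min (t - j) (t - k) ≤ t - k := min_le_right _ _
        _ ≤ t - (j + 1) := by linarith
        _ ≤ max (t - (j + 1)) (t - (k + 1)) := le_max_left _ _
    · have hjk' : (k : ℝ) + 1 ≤ j := by exact_mod_cast Nat.succ_le_of_lt hlt
      calc min (t - j) (t - k) ≤ t - j := min_le_left _ _
        _ ≤ t - (k + 1) := by linarith
        _ ≤ max (t - (j + 1)) (t - (k + 1)) := le_max_right _ _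
  calc ∫⁻ s in Iic t, (‖R (t - s) (h s)‖₊ : ℝ≥0∞)
      = ∑' k : ℕ, ∫⁻ s in Ioc (t - (k + 1) : ℝ) (t - k), (‖R (t - s) (h s)‖₊ : ℝ≥0∞) := by
        rw [hU]
        exact lintegral_iUnion (fun k => measurableSet_Ioc) hdisj _
    _ ≤ ∑' k : ℕ, eLpNorm (fun u => ‖R u‖) q (volume.restrict (Ioc (k : ℝ) (k + 1))) * C := by
        refine ENNReal.tsum_le_tsum fun k => ?_
        refine le_trans (aux_key p q hp1 hp2 hpq R hRstrong hh t k) ?_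
        refine mul_le_mul_right ?_ _
        have hset : Ioc (t - ((k : ℝ) + 1)) (t - k) =
            Ioc (t - ((k : ℝ) + 1)) ((t - ((k : ℝ) + 1)) + 1) := by
          congr 1
          ring
        rw [hset]
        exact hC _
    _ = (∑' k : ℕ, eLpNorm (fun u => ‖R u‖) q (volume.restrict (Ioc (k : ℝ) (k + 1)))) * C :=
        ENNReal.tsum_mul_right


variable {X : Type*} [NormedAddCommGroup X]

lemma aux_eLpNorm_map {e : ℝ → ℝ} (he : MeasurableEmbedding e) (μ : Measure ℝ)
    {p : ℝ≥0∞} (hp0 : p ≠ 0) (hpt : p ≠ ⊤) (f : ℝ → X) :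
    eLpNorm f p (Measure.map e μ) = eLpNorm (fun x => f (e x)) p μ := by
  rw [eLpNorm_eq_lintegral_rpow_enorm_toReal hp0 hpt, eLpNorm_eq_lintegral_rpow_enorm_toReal hp0 hpt,
    he.lintegral_map]

lemma aux_map_translate (c : ℝ) (A : Set ℝ) (hA : MeasurableSet A) :
    Measure.map (fun x : ℝ => x + c) (volume.restrict ((fun x : ℝ => x + c) ⁻¹' A)) =
      volume.restrict A := by
  rw [← Measure.restrict_map (measurable_add_const c) hA,
    (measurePreserving_add_right volume c).map_eq]

/-- Translation of eLpNorm on restricted measures. -/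
lemma aux_eLpNorm_translate (f : ℝ → X) {p : ℝ≥0∞} (hp0 : p ≠ 0) (hpt : p ≠ ⊤) (c u : ℝ) :
    eLpNorm (fun x => f (x + c)) p (volume.restrict (Ioc u (u + 1))) =
      eLpNorm f p (volume.restrict (Ioc (u + c) (u + c + 1))) := by
  have hpre : (fun x : ℝ => x + c) ⁻¹' (Ioc (u + c) (u + c + 1)) = Ioc u (u + 1) := by
    ext x
    simp only [Set.mem_preimage, Set.mem_Ioc]
    constructor <;> rintro ⟨h1, h2⟩ <;> constructor <;> linarith
  rw [← aux_map_translate c (Ioc (u + c) (u + c + 1)) measurableSet_Ioc,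
    aux_eLpNorm_map (measurableEmbedding_addRight c) _ hp0 hpt, hpre]

/-- Convert the `Icc 0 1`-based Stepanov antiperiod condition to the `Ioc t (t+1)` form. -/
lemma aux_antiperiod_convert {p : ℝ≥0∞} (hp0 : p ≠ 0) (hpt : p ≠ ⊤)
    (g : ℝ → X) (τ : ℝ) (ε : ℝ)
    (h : ∀ t : ℝ, eLpNorm (fun s => g (t + τ + s) + g (t + s)) p
        (volume.restrict (Icc (0 : ℝ) 1)) ≤ ENNReal.ofReal ε) :
    ∀ t : ℝ, eLpNorm (fun s => g (s + τ) + g s) p (volume.restrict (Ioc t (t + 1)))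
      ≤ ENNReal.ofReal ε := by
  intro t
  have h1 := h t
  rw [← Measure.restrict_congr_set Ioc_ae_eq_Icc] at h1
  have hpre : (fun x : ℝ => x + t) ⁻¹' (Ioc t (t + 1)) = Ioc 0 1 := by
    ext x
    simp only [Set.mem_preimage, Set.mem_Ioc]
    constructor <;> rintro ⟨ha, hb⟩ <;> constructor <;> linarith
  have hmap := aux_eLpNorm_map (measurableEmbedding_addRight t)
    (volume.restrict (Ioc (0 : ℝ) 1)) hp0 hpt (fun u => g (u + τ) + g u)
  rw [← hpre, aux_map_translate t _ measurableSet_Ioc] at hmap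
  rw [hmap, hpre]
  have heq : (fun x : ℝ => g (x + t + τ) + g (x + t)) =
      fun s : ℝ => g (t + τ + s) + g (t + s) := by
    funext x
    ring_nf
  rw [heq]
  exact h1

/-- Uniform bound on the local `eLpNorm`s of a Stepanov almost anti-periodic function. -/
lemma aux_uniform {p : ℝ≥0∞} (hp1 : 1 ≤ p) (hpt : p ≠ ⊤)
    (g : ℝ → X) (hgmeas : AEStronglyMeasurable g volume)
    (hgloc : ∀ t : ℝ, MemLp g p (volume.restrict (Ioc t (t + 1))))
    (hg : StepanovAlmostAntiPeriodic p g) :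
    ∃ C : ℝ≥0∞, C ≠ ⊤ ∧ ∀ u : ℝ, eLpNorm g p (volume.restrict (Ioc u (u + 1))) ≤ C := by
  have hp0 : p ≠ 0 := (lt_of_lt_of_le zero_lt_one hp1).ne'
  have hpr0 : p.toReal ≠ 0 := ENNReal.toReal_ne_zero.mpr ⟨hp0, hpt⟩
  have hpr0' : (0:ℝ) ≤ 1 / p.toReal := by positivity
  -- finiteness on long intervals
  have hfin : ∀ (n : ℕ) (a : ℝ), eLpNorm g p (volume.restrict (Ioc a (a + n))) ≠ ⊤ := by
    have hJ : ∀ (n : ℕ) (a : ℝ),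
        (∫⁻ x, (‖g x‖₊ : ℝ≥0∞) ^ p.toReal ∂(volume.restrict (Ioc a (a + n)))) ≠ ⊤ := by
      intro n
      induction n with
      | zero =>
        intro a
        simp
      | succ n ih =>
        intro a
        have hsub : Ioc a (a + (n + 1) : ℝ) ⊆ Ioc a (a + n) ∪ Ioc (a + n) (a + n + 1) := by
          intro x hx
          rcases hx with ⟨hx1, hx2⟩
          by_cases hxn : x ≤ a + n
          · exact Or.inl ⟨hx1, hxn⟩
          · push_neg at hxn
            refine Or.inr ⟨hxn, ?_⟩
            push_cast at hx2 ⊢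
            linarith
        have hle : volume.restrict (Ioc a (a + (n + 1) : ℝ)) ≤
            volume.restrict (Ioc a (a + n)) + volume.restrict (Ioc (a + n) (a + n + 1)) :=
          le_trans (Measure.restrict_mono hsub le_rfl) (Measure.restrict_union_le _ _)
        have h1 : (∫⁻ x, (‖g x‖₊ : ℝ≥0∞) ^ p.toReal ∂(volume.restrict (Ioc a (a + (n+1) : ℝ)))) ≤
            (∫⁻ x, (‖g x‖₊ : ℝ≥0∞) ^ p.toReal ∂(volume.restrict (Ioc a (a + n)))) +
            (∫⁻ x, (‖g x‖₊ : ℝ≥0∞) ^ p.toReal ∂(volume.restrict (Ioc (a + n) (a + n + 1)))) := by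
          rw [← lintegral_add_measure]
          exact lintegral_mono' hle le_rfl
        have h2 : (∫⁻ x, (‖g x‖₊ : ℝ≥0∞) ^ p.toReal
            ∂(volume.restrict (Ioc (a + n) (a + n + 1)))) ≠ ⊤ := by
          have hloc := (hgloc (a + n)).2
          rw [eLpNorm_eq_lintegral_rpow_enorm_toReal hp0 hpt] at hloc
          simp only [enorm_eq_nnnorm] at hloc
          intro hcon
          rw [hcon, ENNReal.top_rpow_of_pos (by positivity : (0:ℝ) < 1 / p.toReal)] at hloc
          exact absurd hloc (lt_irrefl ⊤)
        push_cast
        exact ne_top_of_le_ne_top (ENNReal.add_ne_top.mpr ⟨ih a, h2⟩) h1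
    intro n a
    rw [eLpNorm_eq_lintegral_rpow_enorm_toReal hp0 hpt]
    exact (ENNReal.rpow_lt_top_of_nonneg hpr0' (hJ n a)).ne
  -- get ε = 1 antiperiods
  obtain ⟨l, hl0, hl⟩ := hg 1 one_pos
  -- the compact-window bound
  set n : ℕ := ⌈2 * l + 1⌉₊ with hn
  set E : ℝ≥0∞ := eLpNorm g p (volume.restrict (Ioc (-l) (-l + n))) with hE
  have hEfin : E ≠ ⊤ := hfin n (-l)
  have hwin : ∀ w : ℝ, -l ≤ w → w ≤ l →
      eLpNorm g p (volume.restrict (Ioc w (w + 1))) ≤ E := by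
    intro w h1 h2
    refine eLpNorm_mono_measure _ (Measure.restrict_mono ?_ le_rfl)
    intro x hx
    rcases hx with ⟨hx1, hx2⟩
    have hnl : 2 * l + 1 ≤ (n : ℝ) := Nat.le_ceil _
    constructor <;> linarith
  refine ⟨1 + E, by simp [hEfin], fun u => ?_⟩
  have gAESM : ∀ c : ℝ, AEStronglyMeasurable (fun s => g (s + c)) volume := fun c =>
    hgmeas.comp_measurePreserving (measurePreserving_add_right volume c)
  rcases le_or_gt 0 u with hu | hu
  · -- choose an antiperiod τ ∈ [u, u + l]; then u - τ ∈ [-l, 0]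
    obtain ⟨τ, hτmem, hτ1, hτ2⟩ := hl u hu
    obtain ⟨hτpos, hτap⟩ := hτmem
    have hap := aux_antiperiod_convert hp0 hpt g τ 1 hτap (u - τ)
    -- eLpNorm g over Ioc u (u+1) = eLpNorm (g(·+τ)) over Ioc (u-τ) (u-τ+1)
    have ht : eLpNorm (fun x : ℝ => g (x + τ)) p (volume.restrict (Ioc (u - τ) (u - τ + 1))) =
        eLpNorm g p (volume.restrict (Ioc u (u + 1))) := by
      rw [aux_eLpNorm_translate g hp0 hpt τ (u - τ), sub_add_cancel]
    rw [← ht]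
    have hsplit : (fun x : ℝ => g (x + τ)) =
        (fun x : ℝ => g (x + τ) + g x) - fun x : ℝ => g x := by
      funext x
      simp
    rw [hsplit]
    refine le_trans (eLpNorm_sub_le ((gAESM τ).add hgmeas).restrict hgmeas.restrict hp1) ?_
    refine add_le_add (le_trans hap (by norm_num)) ?_
    exact hwin (u - τ) (by linarith) (by linarith)
  · -- u < 0 : choose antiperiod τ ∈ [-u, -u + l]; then u + τ ∈ [0, l]
    obtain ⟨τ, hτmem, hτ1, hτ2⟩ := hl (-u) (by linarith)
    obtain ⟨hτpos, hτap⟩ := hτmem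
    have hap := aux_antiperiod_convert hp0 hpt g τ 1 hτap u
    have hsplit : g = ((fun x : ℝ => g (x + τ) + g x) - fun x : ℝ => g (x + τ)) := by
      funext x
      simp
    nth_rewrite 1 [hsplit]
    refine le_trans (eLpNorm_sub_le ((gAESM τ).add hgmeas).restrict (gAESM τ).restrict hp1) ?_
    refine add_le_add (le_trans hap (by norm_num)) ?_
    rw [aux_eLpNorm_translate g hp0 hpt τ u]
    exact hwin (u + τ) (by linarith) (by linarith)

end AuxLemmas

/-- If `(R(t))_{t>0} ⊆ L(X)` is strongly continuous with
`M = Σ_k ‖R(·)‖_{L^q[k,k+1]} < ∞` and `g` is Stepanov `p`-almost anti-periodic, then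
`G(t) = ∫_{-∞}^t R(t-s) g(s) ds` is well defined (absolutely convergent Bochner
integral) and almost anti-periodic; moreover every common Stepanov `ε`-antiperiod `τ`
of `g` satisfies `‖G(t+τ) + G(t)‖ ≤ M ε` for all `t`. -/
theorem convolution_almostAntiPeriodic
    {X : Type*} [NormedAddCommGroup X] [NormedSpace ℂ X] [CompleteSpace X]
    (p q : ℝ≥0∞) (hp1 : 1 ≤ p) (hp2 : p ≠ ⊤) (hpq : p⁻¹ + q⁻¹ = 1)
    (R : ℝ → X →L[ℂ] X)
    (hRstrong : ∀ x : X, ContinuousOn (fun t => R t x) (Set.Ioi (0 : ℝ)))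
    (g : ℝ → X) (hgmeas : AEStronglyMeasurable g MeasureTheory.volume)
    (hgloc : ∀ t : ℝ, MemLp g p (MeasureTheory.volume.restrict (Set.Ioc t (t + 1))))
    (hM : (∑' k : ℕ, eLpNorm (fun s => ‖R s‖) q
        (MeasureTheory.volume.restrict (Set.Ioc (k : ℝ) (k + 1)))) ≠ ⊤)
    (hg : StepanovAlmostAntiPeriodic p g) :
    (∀ t : ℝ, IntegrableOn (fun s => R (t - s) (g s)) (Set.Iic t) MeasureTheory.volume) ∧
    AlmostAntiPeriodic (fun t => ∫ s in Set.Iic t, R (t - s) (g s)) ∧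
    (∀ ε > 0, ∀ τ : ℝ, 0 < τ →
      (∀ t : ℝ, eLpNorm (fun s => g (s + τ) + g s) p
          (MeasureTheory.volume.restrict (Set.Ioc t (t + 1))) ≤ ENNReal.ofReal ε) →
      ∀ t : ℝ,
        ‖(∫ s in Set.Iic (t + τ), R (t + τ - s) (g s)) + ∫ s in Set.Iic t, R (t - s) (g s)‖
          ≤ (∑' k : ℕ, eLpNorm (fun s => ‖R s‖) q
              (MeasureTheory.volume.restrict (Set.Ioc (k : ℝ) (k + 1)))).toReal * ε) := by
  classical
  have hp0 : p ≠ 0 := (lt_of_lt_of_le zero_lt_one hp1).ne'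
  set M : ℝ≥0∞ := ∑' k : ℕ, eLpNorm (fun s => ‖R s‖) q
      (MeasureTheory.volume.restrict (Set.Ioc (k : ℝ) (k + 1))) with hMdef
  obtain ⟨C, hCt, hC⟩ := aux_uniform hp1 hp2 g hgmeas hgloc hg
  -- generic integrability
  have hint : ∀ (h : ℝ → X), AEStronglyMeasurable h volume →
      ∀ (C' : ℝ≥0∞), C' ≠ ⊤ →
      (∀ u : ℝ, eLpNorm h p (volume.restrict (Set.Ioc u (u + 1))) ≤ C') →
      ∀ t : ℝ, IntegrableOn (fun s => R (t - s) (h s)) (Set.Iic t) volume := by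
    intro h hh C' hC't hC' t
    refine ⟨aux_meas R hRstrong hh t, ?_⟩
    have hb := aux_sum p q hp1 hp2 hpq R hRstrong hh hC' t
    exact lt_of_le_of_lt hb (ENNReal.mul_lt_top hM.lt_top hC't.lt_top)
  have part1 : ∀ t : ℝ, IntegrableOn (fun s => R (t - s) (g s)) (Set.Iic t) volume :=
    hint g hgmeas C hCt hC
  -- the quantitative estimate (part 3)
  have part3 : ∀ ε > 0, ∀ τ : ℝ, 0 < τ →
      (∀ t : ℝ, eLpNorm (fun s => g (s + τ) + g s) p
          (MeasureTheory.volume.restrict (Set.Ioc t (t + 1))) ≤ ENNReal.ofReal ε) →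
      ∀ t : ℝ,
        ‖(∫ s in Set.Iic (t + τ), R (t + τ - s) (g s)) + ∫ s in Set.Iic t, R (t - s) (g s)‖
          ≤ M.toReal * ε := by
    intro ε hε τ hτ hap t
    set hplus : ℝ → X := fun s => g (s + τ) with hhplus
    have hhplusm : AEStronglyMeasurable hplus volume :=
      hgmeas.comp_measurePreserving (measurePreserving_add_right volume τ)
    have hCplus : ∀ u : ℝ, eLpNorm hplus p (volume.restrict (Set.Ioc u (u + 1))) ≤ C := by
      intro u
      rw [hhplus, aux_eLpNorm_translate g hp0 hp2 τ u]
      exact hC (u + τ)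
    have I2 : IntegrableOn (fun s => R (t - s) (hplus s)) (Set.Iic t) volume :=
      hint hplus hhplusm C hCt hCplus t
    have I1 : IntegrableOn (fun s => R (t - s) (g s)) (Set.Iic t) volume := part1 t
    -- change of variables in the first integral
    have hmapI : Measure.map (fun x : ℝ => x + τ) (volume.restrict (Set.Iic t)) =
        volume.restrict (Set.Iic (t + τ)) := by
      have hpre : (fun x : ℝ => x + τ) ⁻¹' (Set.Iic (t + τ)) = Set.Iic t := by
        ext x
        simp only [Set.mem_preimage, Set.mem_Iic]
        constructor <;> intro hx <;> linarith
      rw [← hpre]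
      exact aux_map_translate τ _ measurableSet_Iic
    have hEq : (∫ s in Set.Iic (t + τ), R (t + τ - s) (g s)) =
        ∫ s in Set.Iic t, R (t - s) (hplus s) := by
      rw [← hmapI, (measurableEmbedding_addRight τ).integral_map]
      have harg : ∀ x : ℝ, t + τ - (x + τ) = t - x := fun x => by ring
      simp only [harg, hhplus]
    have hsum_eq : (∫ s in Set.Iic t, R (t - s) (hplus s)) + (∫ s in Set.Iic t, R (t - s) (g s)) =
        ∫ s in Set.Iic t, R (t - s) (hplus s + g s) := by
      rw [← integral_add I2 I1]
      congr 1
      funext s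
      rw [map_add]
    rw [hEq, hsum_eq]
    have hmeas_sum : AEStronglyMeasurable (fun s => hplus s + g s) volume := hhplusm.add hgmeas
    have hbound := aux_sum p q hp1 hp2 hpq R hRstrong hmeas_sum
      (C := ENNReal.ofReal ε) (fun u => hap u) t
    have hnorm := norm_integral_le_lintegral_norm
      (μ := volume.restrict (Set.Iic t)) (fun s => R (t - s) (hplus s + g s))
    refine le_trans hnorm ?_
    have hfin : M * ENNReal.ofReal ε ≠ ⊤ := ENNReal.mul_ne_top hM ENNReal.ofReal_ne_top
    have h1 : (∫⁻ s in Set.Iic t, ENNReal.ofReal ‖R (t - s) (hplus s + g s)‖).toReal ≤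
        (M * ENNReal.ofReal ε).toReal := by
      refine ENNReal.toReal_mono hfin ?_
      refine le_trans (le_of_eq ?_) hbound
      refine lintegral_congr fun s => ?_
      rw [ofReal_norm_eq_enorm, enorm_eq_nnnorm]
    refine le_trans h1 ?_
    rw [ENNReal.toReal_mul, ENNReal.toReal_ofReal hε.le]
  -- almost anti-periodicity of G (part 2)
  have part2 : AlmostAntiPeriodic (fun t => ∫ s in Set.Iic t, R (t - s) (g s)) := by
    intro ε hε
    have hM0 : (0:ℝ) ≤ M.toReal := ENNReal.toReal_nonneg
    set ε' : ℝ := ε / (M.toReal + 1) with hε'def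
    have hε' : 0 < ε' := div_pos hε (by linarith)
    obtain ⟨l, hl0, hl⟩ := hg ε' hε'
    refine ⟨l, hl0, fun b hb => ?_⟩
    obtain ⟨τ, hτmem, h1, h2⟩ := hl b hb
    obtain ⟨hτpos, hτap⟩ := hτmem
    refine ⟨τ, ⟨hτpos, fun t => ?_⟩, h1, h2⟩
    have hap := aux_antiperiod_convert hp0 hp2 g τ ε' hτap
    have hb3 := part3 ε' hε' τ hτpos hap t
    refine le_trans hb3 ?_
    have hle : M.toReal * ε' ≤ ε := by
      rw [hε'def]
      rw [div_eq_mul_inv, ← mul_assoc]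
      have h4 : M.toReal * ε ≤ (M.toReal + 1) * ε := by nlinarith
      calc M.toReal * ε * (M.toReal + 1)⁻¹ ≤ (M.toReal + 1) * ε * (M.toReal + 1)⁻¹ := by
            apply mul_le_mul_of_nonneg_right h4
            positivity
        _ = ε := by
            field_simp
    exact hle
  exact ⟨part1, part2, part3⟩
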